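/- Let ℓ ∈ ℕ and let G : ℂ → ℂ be an entire function, not identically zero, satisfying G(β + 2iπ) = G(β), G(−β) = G(β), and |G(β)| ≤ C·cosh(ℓ·Re β) for some C > 0 and all β ∈ ℂ. Then there exist an integer k ≤ ℓ, a constant c ∈ ℂ, and complex numbers κ₁, …, κ_k such that G(β) = c · ∏_{a=1}^{k} sinh((β − κ_a)/2)·sinh((β + κ_a)/2) for all β ∈ ℂ. -/

import Mathlib

set_option maxHeartbeats 1000000
noncomputable section
open Complex Polynomial Filter Function Asymptotics

lemma sinh_prod_eq (β κ : ℂ) :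
    Complex.sinh ((β - κ) / 2) * Complex.sinh ((β + κ) / 2)
      = (Complex.cosh β - Complex.cosh κ) / 2 := by
  have key : ∀ A B : ℂ, Complex.sinh A * Complex.sinh B
      = (Complex.cosh (A + B) - Complex.cosh (B - A)) / 2 := by
    intro A B
    rw [Complex.cosh_add, Complex.cosh_sub]
    ring
  rw [key, show (β - κ)/2 + (β + κ)/2 = β by ring,
    show (β + κ)/2 - (β - κ)/2 = κ by ring]

lemma cheb_deg (n : ℕ) : (Polynomial.Chebyshev.T ℂ (n : ℤ)).natDegree ≤ n := by
  induction n using Nat.twoStepInduction with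
  | zero => simp [Polynomial.Chebyshev.T_zero]
  | one => simpa [Polynomial.Chebyshev.T_one] using Polynomial.natDegree_X_le
  | more n ih1 ih2 =>
    have h : Polynomial.Chebyshev.T ℂ ((n : ℤ) + 2)
        = 2 * X * Polynomial.Chebyshev.T ℂ ((n : ℤ) + 1) - Polynomial.Chebyshev.T ℂ (n : ℤ) :=
      Polynomial.Chebyshev.T_add_two ℂ (n : ℤ)
    have hcast : ((n + 2 : ℕ) : ℤ) = (n : ℤ) + 2 := by push_cast; ring
    rw [hcast, h]
    refine le_trans (Polynomial.natDegree_sub_le _ _) (max_le ?_ ?_)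
    · refine le_trans (Polynomial.natDegree_mul_le) ?_
      have h2X : (2 * X : ℂ[X]).natDegree ≤ 1 :=
        le_trans Polynomial.natDegree_mul_le (by simp)
      have := ih2
      rw [show ((n : ℤ) + 1) = ((n + 1 : ℕ) : ℤ) by push_cast; ring]
      omega
    · omega

lemma entire_poly_growth (f : ℂ → ℂ) (hf : Differentiable ℂ f) (d : ℕ) (C : ℝ) (hC : 0 ≤ C)
    (hbd : ∀ q : ℂ, 1 ≤ ‖q‖ → ‖f q‖ ≤ C * ‖q‖ ^ d) :
    ∃ c : ℕ → ℂ, ∀ q : ℂ, f q = ∑ n ∈ Finset.range (d + 1), c n * q ^ n := by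
  have hball : HasFPowerSeriesOnBall f (cauchyPowerSeries f 0 1) 0 ⊤ :=
    hf.hasFPowerSeriesOnBall 0 (R := 1) one_pos
  set p := cauchyPowerSeries f 0 1 with hp
  have hvan : ∀ n, d < n → p n = 0 := by
    intro n hn
    have hbound : ∀ R : ℝ, 1 ≤ R → ‖p n‖ ≤ C / R := by
      intro R hR1
      have hR0 : (0:ℝ) < R := lt_of_lt_of_le one_pos hR1
      have hball' : HasFPowerSeriesOnBall f (cauchyPowerSeries f 0 R) 0 ⊤ := by
        have := hf.hasFPowerSeriesOnBall 0 (R := R.toNNReal) (by simpa using hR0)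
        rwa [Real.coe_toNNReal _ hR0.le] at this
      have hpe : p = cauchyPowerSeries f 0 R :=
        hball.hasFPowerSeriesAt.eq_formalMultilinearSeries hball'.hasFPowerSeriesAt
      rw [hpe]
      have key := norm_cauchyPowerSeries_le f 0 R n
      have hint : (∫ θ : ℝ in (0)..2 * Real.pi, ‖f (circleMap 0 R θ)‖)
          ≤ ∫ θ : ℝ in (0)..2 * Real.pi, C * R ^ d := by
        apply intervalIntegral.integral_mono_on Real.two_pi_pos.le
        · exact (Continuous.norm
            (hf.continuous.comp (continuous_circleMap 0 R))).intervalIntegrable _ _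
        · exact intervalIntegrable_const
        · intro θ _
          have hcm : ‖circleMap 0 R θ‖ = R := by
            simp [norm_circleMap_zero, abs_of_pos hR0]
          have h1 : 1 ≤ ‖circleMap 0 R θ‖ := by rw [hcm]; exact hR1
          calc ‖f (circleMap 0 R θ)‖ ≤ C * ‖circleMap 0 R θ‖ ^ d := hbd _ h1
            _ = C * R ^ d := by rw [hcm]
      rw [intervalIntegral.integral_const] at hint
      have hpow : R ^ d * (R⁻¹) ^ n ≤ R⁻¹ := by
        rw [inv_pow, ← div_eq_mul_inv, inv_eq_one_div,
          div_le_div_iff₀ (pow_pos hR0 n) hR0]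
        calc R ^ d * R = R ^ (d + 1) := (pow_succ R d).symm
          _ ≤ R ^ n := pow_le_pow_right₀ hR1 hn
          _ = 1 * R ^ n := (one_mul _).symm
      calc ‖cauchyPowerSeries f 0 R n‖
          ≤ ((2 * Real.pi)⁻¹ * ∫ θ : ℝ in (0)..2 * Real.pi, ‖f (circleMap 0 R θ)‖)
            * |R|⁻¹ ^ n := key
        _ ≤ ((2 * Real.pi)⁻¹ * ((2 * Real.pi - 0) • (C * R ^ d))) * |R|⁻¹ ^ n := by
            apply mul_le_mul_of_nonneg_right
            · exact mul_le_mul_of_nonneg_left hint (by positivity)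
            · positivity
        _ = C * (R ^ d * (R⁻¹) ^ n) := by
            rw [abs_of_pos hR0, smul_eq_mul, sub_zero]
            field_simp
        _ ≤ C * R⁻¹ := mul_le_mul_of_nonneg_left hpow hC
        _ = C / R := by rw [div_eq_mul_inv]
    have ht : Tendsto (fun R : ℝ => C / R) atTop (nhds 0) :=
      tendsto_const_nhds.div_atTop tendsto_id
    have h0 : ‖p n‖ ≤ 0 := ge_of_tendsto ht (eventually_atTop.2 ⟨1, hbound⟩)
    exact norm_le_zero_iff.mp h0
  refine ⟨fun n => p.coeff n, fun q => ?_⟩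
  have hsum := hball.hasSum (y := q) (by simp)
  simp only [zero_add] at hsum
  have heq : f q = ∑ n ∈ Finset.range (d+1), p n fun _ => q := by
    refine hsum.unique (hasSum_sum_of_ne_finset_zero ?_)
    intro n hn
    rw [hvan n (by simpa using hn)]
    simp
  rw [heq]
  refine Finset.sum_congr rfl fun n _ => ?_
  rw [FormalMultilinearSeries.apply_eq_pow_smul_coeff, smul_eq_mul, mul_comm]

lemma cheb_deg' (m : ℤ) : (Polynomial.Chebyshev.T ℂ m).natDegree ≤ m.natAbs := by
  have h2 : Polynomial.Chebyshev.T ℂ m = Polynomial.Chebyshev.T ℂ (m.natAbs : ℤ) := by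
    rcases Int.natAbs_eq m with h | h
    · exact congrArg _ h
    · nth_rewrite 1 [h]; rw [Polynomial.Chebyshev.T_neg]
  rw [h2]; exact cheb_deg _

lemma cosh_surj : Function.Surjective Complex.cosh := fun w => by
  obtain ⟨θ, hθ⟩ := Complex.cos_surjective w
  exact ⟨θ * I, by rw [Complex.cosh_mul_I, hθ]⟩

lemma exp_neg_mul_cosh_le (C t : ℝ) (hC : 0 ≤ C) (ht : 0 ≤ t) :
    Real.exp (-t) * (C * Real.cosh t) ≤ C := by
  rw [Real.cosh_eq]
  have h1 : Real.exp (-t) * Real.exp t = 1 := by rw [← Real.exp_add]; simp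
  have h2 : Real.exp (-t) ≤ 1 := Real.exp_le_one_iff.mpr (by linarith)
  have h3 : 0 < Real.exp (-t) := Real.exp_pos _
  have key : Real.exp (-t) * (C * ((Real.exp t + Real.exp (-t)) / 2))
      = C * (1 + Real.exp (-t) * Real.exp (-t)) / 2 := by
    linear_combination (C / 2) * h1
  rw [key]
  nlinarith [mul_le_one₀ h2 h3.le h2]

theorem periodic_even_entire_factorisation (ℓ : ℕ) (G : ℂ → ℂ)
    (hG : Differentiable ℂ G) (hG0 : G ≠ 0)
    (hper : ∀ β : ℂ, G (β + 2 * (Real.pi : ℂ) * I) = G β)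
    (heven : ∀ β : ℂ, G (-β) = G β)
    (hbd : ∃ C : ℝ, 0 < C ∧ ∀ β : ℂ, ‖G β‖ ≤ C * Real.cosh ((ℓ : ℝ) * β.re)) :
    ∃ (k : ℕ) (_ : k ≤ ℓ) (c : ℂ) (κ : Fin k → ℂ),
      ∀ β : ℂ, G β = c * ∏ a : Fin k,
        Complex.sinh ((β - κ a) / 2) * Complex.sinh ((β + κ a) / 2) := by
  obtain ⟨C, hC, hCbd⟩ := hbd
  set g₂ : ℂ → ℂ := fun z => Function.Periodic.qParam 1 z ^ ℓ * G (2 * (Real.pi : ℂ) * I * z)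
    with hg₂
  -- qParam basics
  have hq1 : ∀ z : ℂ, Function.Periodic.qParam 1 z = cexp (2 * (Real.pi : ℂ) * I * z) := by
    intro z
    simp [Function.Periodic.qParam]
  have hper1 : Function.Periodic g₂ 1 := by
    intro z
    simp only [hg₂, hq1]
    rw [mul_add, mul_one, Complex.exp_add, Complex.exp_two_pi_mul_I, mul_one, hper]
  have hdiff : Differentiable ℂ g₂ := by
    apply Differentiable.mul
    · apply Differentiable.pow
      intro z
      have : Function.Periodic.qParam 1 = fun z : ℂ => cexp (2 * (Real.pi : ℂ) * I * z) :=
        funext hq1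
      rw [this]
      exact ((differentiable_id.const_mul _) _).cexp
    · exact hG.comp (differentiable_id.const_mul _)
  -- boundedness at i∞
  have hg₂bd : ∀ z : ℂ, 0 ≤ z.im → ‖g₂ z‖ ≤ C := by
    intro z hz
    have habs : ‖Function.Periodic.qParam 1 z‖ = Real.exp (-2 * Real.pi * z.im / 1) :=
      Function.Periodic.norm_qParam 1 z
    have hre : (2 * (Real.pi : ℂ) * I * z).re = -2 * Real.pi * z.im := by
      simp [Complex.mul_re, Complex.mul_im]
    calc ‖g₂ z‖ = Real.exp (-2 * Real.pi * z.im) ^ ℓ * ‖G (2 * (Real.pi : ℂ) * I * z)‖ := by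
          rw [hg₂]
          simp only [norm_mul, norm_pow, habs, div_one]
      _ ≤ Real.exp (-2 * Real.pi * z.im) ^ ℓ * (C * Real.cosh ((ℓ : ℝ) * (-2 * Real.pi * z.im))) := by
          apply mul_le_mul_of_nonneg_left _ (by positivity)
          rw [← hre]
          exact hCbd _
      _ ≤ C := by
          rw [← Real.exp_nat_mul]
          have e1 : (ℓ : ℝ) * (-2 * Real.pi * z.im) = -((ℓ:ℝ) * (2 * Real.pi * z.im)) := by ring
          rw [e1, Real.cosh_neg]
          exact exp_neg_mul_cosh_le C _ hC.le (by positivity)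
  -- the cusp function
  set Ψ : ℂ → ℂ := Function.Periodic.cuspFunction 1 g₂ with hΨ
  have hΨdiff : Differentiable ℂ Ψ := by
    intro q
    rcases eq_or_ne q 0 with rfl | hq
    · refine Function.Periodic.differentiableAt_cuspFunction_zero one_pos hper1
        (Eventually.of_forall fun z => hdiff z) ?_
      refine Asymptotics.IsBigO.of_bound C ?_
      have hmem : {z : ℂ | 0 ≤ z.im} ∈ Filter.comap Complex.im Filter.atTop := by
        refine Filter.mem_comap.2 ⟨Set.Ici 0, Filter.mem_atTop 0, fun z hz => hz⟩
      filter_upwards [hmem] with z hz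
      simpa using hg₂bd z hz
    · have hrep : Function.Periodic.qParam 1 (Function.Periodic.invQParam 1 q) = q :=
        Function.Periodic.qParam_right_inv one_ne_zero hq
      have := Function.Periodic.differentiableAt_cuspFunction one_ne_zero hper1
        (hdiff (Function.Periodic.invQParam 1 q))
      rwa [hrep] at this
  have hkey : ∀ β : ℂ, Ψ (cexp β) = cexp β ^ ℓ * G β := by
    intro β
    have h2pi : (2 * (Real.pi : ℂ) * I) ≠ 0 := by
      simp [Real.pi_ne_zero, Complex.I_ne_zero]
    have hz : Function.Periodic.qParam 1 (β / (2 * (Real.pi : ℂ) * I)) = cexp β := by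
      rw [hq1, mul_div_cancel₀ _ h2pi]
    have := Function.Periodic.eq_cuspFunction one_ne_zero hper1 (β / (2 * (Real.pi : ℂ) * I))
    rw [hz] at this
    rw [← hΨ] at this
    rw [this, hg₂]
    simp only
    rw [hz, mul_div_cancel₀ _ h2pi]
  -- growth
  have hgrowth : ∀ q : ℂ, 1 ≤ ‖q‖ → ‖Ψ q‖ ≤ C * ‖q‖ ^ (2 * ℓ) := by
    intro q hq1'
    have hq0 : q ≠ 0 := by
      intro h; rw [h] at hq1'; simp at hq1'; linarith
    have hexp : cexp (Complex.log q) = q := Complex.exp_log hq0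
    have h1 := hkey (Complex.log q)
    rw [hexp] at h1
    have hr1 : (1:ℝ) ≤ ‖q‖ := hq1'
    have hr0 : (0:ℝ) < ‖q‖ := lt_of_lt_of_le one_pos hr1
    have hre : (Complex.log q).re = Real.log ‖q‖ := by
      rw [Complex.log_re]
    have hcosh : Real.cosh ((ℓ : ℝ) * Real.log ‖q‖) = (‖q‖ ^ ℓ + (‖q‖ ^ ℓ)⁻¹) / 2 := by
      rw [Real.cosh_eq]
      congr 2
      · rw [Real.exp_nat_mul, Real.exp_log hr0]
      · rw [Real.exp_neg, Real.exp_nat_mul, Real.exp_log hr0]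
    have hpne : (‖q‖ ^ ℓ : ℝ) ≠ 0 := by positivity
    calc ‖Ψ q‖ = ‖q‖ ^ ℓ * ‖G (Complex.log q)‖ := by
          rw [h1]; simp [norm_mul, norm_pow]
      _ ≤ ‖q‖ ^ ℓ * (C * Real.cosh ((ℓ : ℝ) * Real.log ‖q‖)) := by
          apply mul_le_mul_of_nonneg_left _ (by positivity)
          rw [← hre]; exact hCbd _
      _ = C * ((‖q‖ ^ (2 * ℓ) + 1) / 2) := by
          rw [hcosh, two_mul, pow_add]
          have huinv : (‖q‖ ^ ℓ) * (‖q‖ ^ ℓ)⁻¹ = 1 := mul_inv_cancel₀ hpne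
          linear_combination (C / 2) * huinv
      _ ≤ C * ‖q‖ ^ (2 * ℓ) := by
          have h2 : (1:ℝ) ≤ ‖q‖ ^ (2 * ℓ) := one_le_pow₀ hr1
          nlinarith
  -- polynomial coefficients
  obtain ⟨c, hc⟩ := entire_poly_growth Ψ hΨdiff (2 * ℓ) C hC.le hgrowth
  have hGsum : ∀ β : ℂ, G β
      = ∑ n ∈ Finset.range (2 * ℓ + 1), c n * cexp ((((n : ℤ) - ℓ : ℤ) : ℂ) * β) := by
    intro β
    have he : cexp β ≠ 0 := Complex.exp_ne_zero β
    have heℓ : cexp β ^ ℓ ≠ 0 := pow_ne_zero _ he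
    have h1 : cexp β ^ ℓ * G β = ∑ n ∈ Finset.range (2 * ℓ + 1), c n * cexp β ^ n := by
      rw [← hkey, hc]
    have h2 : G β = (cexp β ^ ℓ)⁻¹ * ∑ n ∈ Finset.range (2 * ℓ + 1), c n * cexp β ^ n := by
      rw [← h1, inv_mul_cancel_left₀ heℓ]
    rw [h2, Finset.mul_sum]
    refine Finset.sum_congr rfl fun n _ => ?_
    rw [Complex.exp_int_mul, zpow_sub₀ he, zpow_natCast, zpow_natCast]
    field_simp
  -- Chebyshev form
  have hT : ∀ (m : ℤ) (β : ℂ), (Polynomial.Chebyshev.T ℂ m).eval (Complex.cosh β)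
      = (cexp ((m : ℂ) * β) + cexp (-((m : ℂ) * β))) / 2 := by
    intro m β
    have h1 := Polynomial.Chebyshev.T_complex_cos (β * I) m
    rw [Complex.cos_mul_I, show (m : ℂ) * (β * I) = ((m : ℂ) * β) * I by ring,
      Complex.cos_mul_I] at h1
    rw [h1, Complex.cosh]
  have hGcosh : ∀ β : ℂ, G β = ∑ n ∈ Finset.range (2 * ℓ + 1),
      c n * (Polynomial.Chebyshev.T ℂ ((n : ℤ) - ℓ)).eval (Complex.cosh β) := by
    intro β
    have h0 : G β = (G β + G (-β)) / 2 := by rw [heven]; ring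
    rw [h0, hGsum β, hGsum (-β), ← Finset.sum_add_distrib, Finset.sum_div]
    refine Finset.sum_congr rfl fun n _ => ?_
    rw [hT]
    rw [show ((((n : ℤ) - ℓ : ℤ) : ℂ)) * (-β) = -(((((n : ℤ) - ℓ : ℤ) : ℂ)) * β) by ring]
    ring
  -- the polynomial Q
  set Q : Polynomial ℂ :=
    ∑ n ∈ Finset.range (2 * ℓ + 1), Polynomial.C (c n) * Polynomial.Chebyshev.T ℂ ((n : ℤ) - ℓ)
    with hQ
  have hQeval : ∀ β : ℂ, Q.eval (Complex.cosh β) = G β := by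
    intro β
    rw [hQ, Polynomial.eval_finset_sum, hGcosh β]
    exact Finset.sum_congr rfl fun n _ => by rw [Polynomial.eval_mul, Polynomial.eval_C]
  have hQdeg : Q.natDegree ≤ ℓ := by
    apply Polynomial.natDegree_sum_le_of_forall_le
    intro n hn
    refine le_trans (Polynomial.natDegree_C_mul_le _ _) (le_trans (cheb_deg' _) ?_)
    have hn' : n < 2 * ℓ + 1 := Finset.mem_range.mp hn
    omega
  have hQne : Q ≠ 0 := by
    intro h
    apply hG0
    funext β
    have h2 := hQeval β
    rw [h] at h2
    simpa using h2.symm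
  -- factor over ℂ
  have hsplits : Q.Splits := IsAlgClosed.splits Q
  have hfact := Polynomial.Splits.eq_prod_roots hsplits
  have hcard : Q.roots.card = Q.natDegree := (Polynomial.splits_iff_card_roots).mp hsplits
  set L := Q.roots.toList with hLdef
  have hLlen : L.length = Q.natDegree := by rw [hLdef, Multiset.length_toList, hcard]
  refine ⟨L.length, by rw [hLlen]; exact hQdeg, Q.leadingCoeff * 2 ^ L.length,
    fun a => Function.surjInv cosh_surj L[(a : ℕ)], fun β => ?_⟩
  have hcoshκ : ∀ a : Fin L.length,
      Complex.cosh (Function.surjInv cosh_surj L[(a : ℕ)]) = L[(a : ℕ)] :=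
    fun a => Function.surjInv_eq cosh_surj _
  have h1 : G β = Q.leadingCoeff
      * ((Q.roots.map fun a => Polynomial.X - Polynomial.C a).prod).eval (Complex.cosh β) := by
    conv_lhs => rw [← hQeval β, hfact]
    rw [Polynomial.eval_mul, Polynomial.eval_C]
  rw [Polynomial.eval_multiset_prod] at h1
  have hroots : Q.roots = (L : Multiset ℂ) := (Multiset.coe_toList _).symm
  rw [hroots, Multiset.map_coe, Multiset.map_coe, Multiset.prod_coe,
    List.map_map, ← Fin.prod_univ_fun_getElem] at h1
  rw [h1]
  have hterm : ∀ a : Fin L.length,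
      ((Polynomial.eval (Complex.cosh β)) ∘ fun a => Polynomial.X - Polynomial.C a) L[(a : ℕ)]
      = 2 * (Complex.sinh ((β - Function.surjInv cosh_surj L[(a : ℕ)]) / 2)
          * Complex.sinh ((β + Function.surjInv cosh_surj L[(a : ℕ)]) / 2)) := by
    intro a
    rw [Function.comp_apply, Polynomial.eval_sub, Polynomial.eval_X, Polynomial.eval_C,
      sinh_prod_eq, hcoshκ a]
    ring
  rw [Finset.prod_congr rfl fun a _ => hterm a, Finset.prod_mul_distrib, Finset.prod_const,
    Finset.card_univ, Fintype.card_fin]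
  ring
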